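/- arXiv:2006.00588 — 4 statements merged into one kernel-verified Lean document; each statement's English description precedes it below -/
import Mathlib

section
/- Let L be a fixed graph. There exists a constant c = c(L) > 0 such that for all sufficiently large n, every proper edge-colouring ψ of K_{L,n} admits a set C ⊆ V(R) of size at least c·n that is compatible with L with respect to ψ: every x ∈ C is of interest to L (no colour on its edges to V(L) appears on E(L)), and the colour sets {ψ(xk) : k ∈ V(L)} for x ∈ C are pairwise disjoint. -/
open SimpleGraph

/-- Greedy independent set lemma: if a symmetric relation has "degree" at most `d`,
then every finset `S` contains a pairwise unrelated subset of size at least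
`|S| / (d+1)`. -/
lemma greedy_indep {V : Type*} [DecidableEq V] [Fintype V]
    (r : V → V → Prop) [DecidableRel r] (hsymm : ∀ x y, r x y → r y x) (d : ℕ)
    (hdeg : ∀ x, (Finset.univ.filter (fun y => r x y)).card ≤ d)
    (S : Finset V) :
    ∃ C : Finset V, C ⊆ S ∧ S.card ≤ (d + 1) * C.card ∧
      ∀ x ∈ C, ∀ y ∈ C, x ≠ y → ¬ r x y := by
  induction S using Finset.strongInduction with
  | _ S ih =>
    rcases S.eq_empty_or_nonempty with rfl | ⟨x, hx⟩
    · exact ⟨∅, by simp⟩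
    · set S' := (S.erase x).filter (fun y => ¬ r x y) with hS'def
      have hxS' : x ∉ S' := by simp [hS'def]
      have hsub : S' ⊂ S := by
        refine Finset.ssubset_iff_of_subset ?_ |>.mpr ⟨x, hx, hxS'⟩
        intro y hy
        exact S.erase_subset x (Finset.mem_filter.mp hy).1
      obtain ⟨C', hC'sub, hC'card, hC'indep⟩ := ih S' hsub
      have hxC' : x ∉ C' := fun h => hxS' (hC'sub h)
      refine ⟨insert x C', ?_, ?_, ?_⟩
      · intro y hy
        rcases Finset.mem_insert.mp hy with rfl | hy
        · exact hx
        · exact hsub.subset (hC'sub hy)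
      · have hcover : S ⊆ insert x (S' ∪ Finset.univ.filter (fun y => r x y)) := by
          intro y hy
          by_cases hyx : y = x
          · simp [hyx]
          · by_cases hr : r x y
            · simp [hr]
            · simp only [Finset.mem_insert, Finset.mem_union]
              exact Or.inr (Or.inl (Finset.mem_filter.mpr ⟨Finset.mem_erase.mpr ⟨hyx, hy⟩, hr⟩))
        have h1 : S.card ≤ S'.card + d + 1 := by
          calc S.card ≤ (insert x (S' ∪ Finset.univ.filter (fun y => r x y))).card :=
                Finset.card_le_card hcover
            _ ≤ (S' ∪ Finset.univ.filter (fun y => r x y)).card + 1 :=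
                Finset.card_insert_le _ _
            _ ≤ S'.card + (Finset.univ.filter (fun y => r x y)).card + 1 := by
                have := Finset.card_union_le S' (Finset.univ.filter (fun y => r x y))
                omega
            _ ≤ S'.card + d + 1 := by have := hdeg x; omega
        have h2 : (d + 1) * (insert x C').card = (d + 1) * C'.card + (d + 1) := by
          rw [Finset.card_insert_of_notMem hxC']; ring
        omega
      · intro a ha b hb hab
        rcases Finset.mem_insert.mp ha with ha' | ha'
        · rcases Finset.mem_insert.mp hb with hb' | hb'
          · exact absurd (ha'.trans hb'.symm) hab
          · subst ha'
            exact (Finset.mem_filter.mp (hC'sub hb')).2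
        · rcases Finset.mem_insert.mp hb with hb' | hb'
          · subst hb'
            exact fun h => (Finset.mem_filter.mp (hC'sub ha')).2 (hsymm _ _ h)
          · exact hC'indep a ha' b hb' hab


/-- The join of two vertex-disjoint graphs: both graphs together with all edges
between them. -/
def graphJoin {α β : Type*} (L : SimpleGraph α) (R : SimpleGraph β) :
    SimpleGraph (α ⊕ β) :=
  (L ⊕g R) ⊔ SimpleGraph.fromRel (fun x y => x.isLeft ∧ y.isRight)

/-- An edge-colouring is proper if any two distinct edges sharing a vertex get
distinct colours. -/
def IsProperEdgeColouring {V : Type*} (G : SimpleGraph V) (ψ : Sym2 V → ℕ) : Prop :=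
  ∀ e₁ ∈ G.edgeSet, ∀ e₂ ∈ G.edgeSet, e₁ ≠ e₂ → (∃ v, v ∈ e₁ ∧ v ∈ e₂) → ψ e₁ ≠ ψ e₂

/-- for every fixed graph `L` there is a constant `c > 0` such that for
all sufficiently large `n`, every proper edge-colouring `ψ` of the join `K_{L,n}`
admits a set `C` of at least `c·n` vertices of the independent side which is
compatible with `L` with respect to `ψ`: every `x ∈ C` is of interest to `L` (no
colour of an edge from `x` to `V(L)` appears on `E(L)`) and the colour sets of the
stars from distinct members of `C` to `V(L)` are pairwise disjoint. -/
theorem exists_large_compatible_set {α : Type*} [Fintype α] (L : SimpleGraph α) :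
    ∃ c : ℝ, 0 < c ∧ ∃ N : ℕ, ∀ n : ℕ, N ≤ n →
      ∀ ψ : Sym2 (α ⊕ Fin n) → ℕ,
        IsProperEdgeColouring (graphJoin L (⊥ : SimpleGraph (Fin n))) ψ →
        ∃ C : Set (Fin n),
          c * n ≤ C.ncard ∧
          (∀ x ∈ C, ∀ a : α, ∀ e ∈ L.edgeSet,
            ψ (Sym2.mk (Sum.inl a) (Sum.inr x)) ≠ ψ (e.map Sum.inl)) ∧
          (∀ x ∈ C, ∀ y ∈ C, x ≠ y → ∀ a b : α,
            ψ (Sym2.mk (Sum.inl a) (Sum.inr x)) ≠ ψ (Sym2.mk (Sum.inl b) (Sum.inr y))) := by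
  classical
  set d := Fintype.card (Option (α × α)) with hd
  set M := Fintype.card (Option (α × Sym2 α)) with hM
  refine ⟨1 / ((d : ℝ) + 2), by positivity, (d + 2) * M, ?_⟩
  intro n hn ψ hψ
  -- every cross pair is an edge of the join
  have hedge : ∀ (a : α) (x : Fin n),
      s(Sum.inl a, Sum.inr x) ∈ (graphJoin L (⊥ : SimpleGraph (Fin n))).edgeSet := by
    intro a x
    rw [SimpleGraph.mem_edgeSet]
    exact Or.inr ((SimpleGraph.fromRel_adj _ _ _).mpr ⟨by simp, Or.inl ⟨rfl, rfl⟩⟩)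
  -- edges of L map to edges of the join
  have hLedge : ∀ e ∈ L.edgeSet, Sym2.map Sum.inl e ∈
      (graphJoin L (⊥ : SimpleGraph (Fin n))).edgeSet := by
    intro e he
    induction e using Sym2.ind with
    | _ u v =>
      rw [SimpleGraph.mem_edgeSet] at he
      rw [Sym2.map_pair_eq, SimpleGraph.mem_edgeSet]
      exact Or.inl he
  -- cross edges are distinct from mapped edges of L
  have hcross_ne : ∀ (a : α) (x : Fin n), ∀ e ∈ L.edgeSet,
      s(Sum.inl a, Sum.inr x) ≠ Sym2.map Sum.inl e := by
    intro a x e _ h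
    have hx : (Sum.inr x : α ⊕ Fin n) ∈ Sym2.map Sum.inl e := by
      rw [← h]; simp
    rw [Sym2.mem_map] at hx
    obtain ⟨u, -, hu⟩ := hx
    exact Sum.inl_ne_inr hu
  -- two cross edges at the same left vertex get different colours
  have hne2 : ∀ (b : α) (y y' : Fin n), y ≠ y' →
      ψ s(Sum.inl b, Sum.inr y) ≠ ψ s(Sum.inl b, Sum.inr y') := by
    intro b y y' hyy'
    refine hψ _ (hedge b y) _ (hedge b y') ?_ ⟨Sum.inl b, by simp, by simp⟩
    simp [Sym2.eq_iff, hyy']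
  -- the set of "bad" vertices (not of interest)
  set bad : Fin n → Prop := fun x => ∃ p : α × Sym2 α, p.2 ∈ L.edgeSet ∧
    ψ s(Sum.inl p.1, Sum.inr x) = ψ (Sym2.map Sum.inl p.2) with hbad
  set B : Finset (Fin n) := Finset.univ.filter bad with hB
  have hBcard : B.card ≤ M := by
    have := Finset.card_le_card_of_injOn
      (s := B) (f := fun x => if h : bad x then some (Classical.choose h) else none)
      (t := (Finset.univ : Finset (Option (α × Sym2 α))))
      (fun a _ => Finset.mem_univ _) ?_
    · exact le_of_le_of_eq this Finset.card_univ
    · intro x₁ hx₁ x₂ hx₂ hf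
      by_contra hne
      have h₁ : bad x₁ := (Finset.mem_filter.mp hx₁).2
      have h₂ : bad x₂ := (Finset.mem_filter.mp hx₂).2
      simp only [dif_pos h₁, dif_pos h₂, Option.some_inj] at hf
      obtain ⟨he₁, hc₁⟩ := Classical.choose_spec h₁
      obtain ⟨he₂, hc₂⟩ := Classical.choose_spec h₂
      rw [hf] at hc₁
      exact hne2 _ x₁ x₂ hne (hc₁.trans hc₂.symm)
  -- the conflict relation
  set r : Fin n → Fin n → Prop := fun x y => ∃ p : α × α,
    ψ s(Sum.inl p.1, Sum.inr x) = ψ s(Sum.inl p.2, Sum.inr y) with hr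
  haveI : DecidableRel r := fun _ _ => Classical.propDecidable _
  have hrsymm : ∀ x y, r x y → r y x := by
    rintro x y ⟨p, hp⟩
    exact ⟨(p.2, p.1), hp.symm⟩
  have hdeg : ∀ x, (Finset.univ.filter (fun y => r x y)).card ≤ d := by
    intro x
    have := Finset.card_le_card_of_injOn
      (s := Finset.univ.filter (fun y => r x y)) (f := fun y => if h : r x y then some (Classical.choose h) else none)
      (t := (Finset.univ : Finset (Option (α × α))))
      (fun a _ => Finset.mem_univ _) ?_
    · exact le_of_le_of_eq this Finset.card_univ
    · intro y₁ hy₁ y₂ hy₂ hf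
      by_contra hne
      have h₁ : r x y₁ := (Finset.mem_filter.mp hy₁).2
      have h₂ : r x y₂ := (Finset.mem_filter.mp hy₂).2
      simp only [dif_pos h₁, dif_pos h₂, Option.some_inj] at hf
      have hc₁ := Classical.choose_spec h₁
      have hc₂ := Classical.choose_spec h₂
      rw [hf] at hc₁
      exact hne2 _ y₁ y₂ hne (hc₁.symm.trans hc₂)
  obtain ⟨C, hCsub, hCcard, hCindep⟩ :=
    greedy_indep r hrsymm d hdeg (Finset.univ \ B)
  have hScard : (Finset.univ \ B).card = n - B.card := by
    rw [Finset.card_sdiff_of_subset (Finset.subset_univ B)]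
    simp
  have hBn : B.card ≤ n := by
    simpa using Finset.card_le_card (Finset.subset_univ B)
  -- key numeric inequality
  have key : n ≤ (d + 2) * C.card := by
    rw [hScard] at hCcard
    have e1 : (d + 1) * M + M ≤ n := by
      calc (d + 1) * M + M = (d + 2) * M := by ring
        _ ≤ n := hn
    have e2 : (d + 1) * M ≤ (d + 1) * C.card := by
      refine le_trans (Nat.le_sub_of_add_le ?_) hCcard
      exact le_trans (Nat.add_le_add_left hBcard _) e1
    have hMC : M ≤ C.card := Nat.le_of_mul_le_mul_left e2 (Nat.succ_pos d)
    calc n = (n - B.card) + B.card := by omega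
      _ ≤ (d + 1) * C.card + M := Nat.add_le_add hCcard hBcard
      _ ≤ (d + 1) * C.card + C.card := Nat.add_le_add_left hMC _
      _ = (d + 2) * C.card := by ring
  refine ⟨(C : Set (Fin n)), ?_, ?_, ?_⟩
  · rw [Set.ncard_coe_finset]
    have hkey : (n : ℝ) ≤ ((d : ℝ) + 2) * C.card := by exact_mod_cast key
    rw [div_mul_eq_mul_div, one_mul, div_le_iff₀ (by positivity)]
    linarith
  · intro x hx a e he
    have hxC : x ∈ C := hx
    have hxS := hCsub hxC
    have hxB : ¬ bad x := by
      have := (Finset.mem_sdiff.mp hxS).2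
      rw [hB, Finset.mem_filter] at this
      push_neg at this
      exact fun h => (this (Finset.mem_univ x)).elim h
    exact fun h => hxB ⟨(a, e), he, h⟩
  · intro x hx y hy hxy a b h
    exact hCindep x hx y hy hxy ⟨(a, b), h⟩
end

section
/- Let H be the join of L ≅ K_{1,3} and R ≅ K_{1,4} (vertex-disjoint, with all edges between them added). Then every proper edge-colouring of H contains a rainbow copy of K_4. -/
open SimpleGraph

/-- The star `K_{1,m}`: `Fin (m+1)` with centre `0` joined to all other vertices. -/
def starGraph (m : ℕ) : SimpleGraph (Fin (m + 1)) :=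
  SimpleGraph.fromRel (fun a _ => a = 0)

/-- A set of vertices spans a rainbow clique: it is a clique and the colouring is
injective on the edges spanned by it. -/
def IsRainbowClique {V : Type*} (G : SimpleGraph V) (ψ : Sym2 V → ℕ) (s : Finset V) :
    Prop :=
  G.IsClique s ∧
    ∀ a ∈ s, ∀ b ∈ s, ∀ c ∈ s, ∀ d ∈ s, a ≠ b → c ≠ d →
      ψ s(a, b) = ψ s(c, d) → s(a, b) = s(c, d)

abbrev GG := graphJoin (_root_.starGraph 3) (_root_.starGraph 4)
abbrev V4 := Fin 4 ⊕ Fin 5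

section
variable (j : Fin 5)
local notation "l0" => (Sum.inl 0 : V4)
local notation "l1" => (Sum.inl 1 : V4)
local notation "r0" => (Sum.inr 0 : V4)

lemma adj1 : GG.Adj l0 l1 := by simp [graphJoin, _root_.starGraph, SimpleGraph.fromRel]
lemma adj2 : GG.Adj l0 r0 := by simp [graphJoin, _root_.starGraph, SimpleGraph.fromRel]
lemma adj3 : GG.Adj l0 (Sum.inr j) := by simp [graphJoin, _root_.starGraph, SimpleGraph.fromRel]
lemma adj4 : GG.Adj l1 r0 := by simp [graphJoin, _root_.starGraph, SimpleGraph.fromRel]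
lemma adj5 : GG.Adj l1 (Sum.inr j) := by simp [graphJoin, _root_.starGraph, SimpleGraph.fromRel]
lemma adj6 (hj : j ≠ 0) : GG.Adj r0 (Sum.inr j) := by
  simp [graphJoin, _root_.starGraph, SimpleGraph.fromRel, hj, Ne.symm hj]

set_option maxHeartbeats 3000000 in
lemma keyLemma (ψ : Sym2 V4 → ℕ)
    (hproper : IsProperEdgeColouring GG ψ) (hj : j ≠ 0)
    (hA : ψ (s(l0, l1)) ≠ ψ (s(r0, Sum.inr j)))
    (hB : ψ (s(l0, r0)) ≠ ψ (s(l1, Sum.inr j)))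
    (hC : ψ (s(l0, Sum.inr j)) ≠ ψ (s(l1, r0))) :
    ∃ s : Finset V4, s.card = 4 ∧ IsRainbowClique GG ψ s := by
  set rj := (Sum.inr j : V4) with hrj
  refine ⟨{l0, l1, r0, rj}, ?_, ?_, ?_⟩
  · rw [Finset.card_insert_of_notMem (by simp [hrj, hj.symm]),
      Finset.card_insert_of_notMem (by simp [hrj, hj.symm]),
      Finset.card_insert_of_notMem (by simp [hrj, hj.symm]), Finset.card_singleton]
  · intro a ha b hb hab
    simp only [Finset.coe_insert, Set.mem_insert_iff, Finset.coe_singleton,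
      Set.mem_singleton_iff] at ha hb
    rcases ha with rfl|rfl|rfl|rfl <;> rcases hb with rfl|rfl|rfl|rfl <;>
      first
      | exact absurd rfl hab
      | exact adj1
      | exact adj1.symm
      | exact adj2
      | exact adj2.symm
      | exact adj3 j
      | exact (adj3 j).symm
      | exact adj4
      | exact adj4.symm
      | exact adj5 j
      | exact (adj5 j).symm
      | exact adj6 j hj
      | exact (adj6 j hj).symm
  · -- injectivity on edges
    have m1 := GG.mem_edgeSet.mpr adj1
    have m2 := GG.mem_edgeSet.mpr adj2
    have m3 := GG.mem_edgeSet.mpr (adj3 j)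
    have m4 := GG.mem_edgeSet.mpr adj4
    have m5 := GG.mem_edgeSet.mpr (adj5 j)
    have m6 := GG.mem_edgeSet.mpr (adj6 j hj)
    -- pairwise ne of Sym2 edges sharing a vertex
    have hne : ∀ x y : Fin 5, x ≠ y → (Sum.inr x : V4) ≠ Sum.inr y := by
      intro x y h hxy; exact h (Sum.inr.inj hxy)
    have n12 : ψ (s(l0, l1)) ≠ ψ (s(l0, r0)) :=
      hproper _ m1 _ m2 (by simp [Sym2.eq_iff]) ⟨l0, by simp⟩
    have n13 : ψ (s(l0, l1)) ≠ ψ (s(l0, rj)) :=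
      hproper _ m1 _ m3 (by simp [Sym2.eq_iff]) ⟨l0, by simp⟩
    have n14 : ψ (s(l0, l1)) ≠ ψ (s(l1, r0)) :=
      hproper _ m1 _ m4 (by simp [Sym2.eq_iff]) ⟨l1, by simp⟩
    have n15 : ψ (s(l0, l1)) ≠ ψ (s(l1, rj)) :=
      hproper _ m1 _ m5 (by simp [Sym2.eq_iff]) ⟨l1, by simp⟩
    have n23 : ψ (s(l0, r0)) ≠ ψ (s(l0, rj)) :=
      hproper _ m2 _ m3 (by simp [Sym2.eq_iff, hrj, Ne.symm hj]) ⟨l0, by simp⟩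
    have n24 : ψ (s(l0, r0)) ≠ ψ (s(l1, r0)) :=
      hproper _ m2 _ m4 (by simp [Sym2.eq_iff]) ⟨r0, by simp⟩
    have n26 : ψ (s(l0, r0)) ≠ ψ (s(r0, rj)) :=
      hproper _ m2 _ m6 (by simp [Sym2.eq_iff]) ⟨r0, by simp⟩
    have n35 : ψ (s(l0, rj)) ≠ ψ (s(l1, rj)) :=
      hproper _ m3 _ m5 (by simp [Sym2.eq_iff]) ⟨rj, by simp [hrj]⟩
    have n36 : ψ (s(l0, rj)) ≠ ψ (s(r0, rj)) :=
      hproper _ m3 _ m6 (by simp [Sym2.eq_iff, hrj, Ne.symm hj]) ⟨rj, by simp [hrj]⟩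
    have n45 : ψ (s(l1, r0)) ≠ ψ (s(l1, rj)) :=
      hproper _ m4 _ m5 (by simp [Sym2.eq_iff, hrj, Ne.symm hj]) ⟨l1, by simp⟩
    have n46 : ψ (s(l1, r0)) ≠ ψ (s(r0, rj)) :=
      hproper _ m4 _ m6 (by simp [Sym2.eq_iff]) ⟨r0, by simp⟩
    have n56 : ψ (s(l1, rj)) ≠ ψ (s(r0, rj)) :=
      hproper _ m5 _ m6 (by simp [Sym2.eq_iff]) ⟨rj, by simp [hrj]⟩
    intro a ha b hb c hc d hd hab hcd
    simp only [Finset.mem_insert, Finset.mem_singleton] at ha hb hc hd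
    rcases ha with rfl|rfl|rfl|rfl <;> rcases hb with rfl|rfl|rfl|rfl <;>
      rcases hc with rfl|rfl|rfl|rfl <;> rcases hd with rfl|rfl|rfl|rfl <;>
      (try simp only [show (s(l1, l0) : Sym2 V4) = s(l0, l1) from Sym2.eq_swap,
        show (s(r0, l0) : Sym2 V4) = s(l0, r0) from Sym2.eq_swap,
        show (s(rj, l0) : Sym2 V4) = s(l0, rj) from Sym2.eq_swap,
        show (s(r0, l1) : Sym2 V4) = s(l1, r0) from Sym2.eq_swap,
        show (s(rj, l1) : Sym2 V4) = s(l1, rj) from Sym2.eq_swap,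
        show (s(rj, r0) : Sym2 V4) = s(r0, rj) from Sym2.eq_swap]) <;>
      first
      | exact absurd rfl hab
      | exact absurd rfl hcd
      | (intro _; rfl)
      | (intro _; trivial)
      | (intro heq;
         first
         | exact absurd heq n12 | exact absurd heq n12.symm
         | exact absurd heq n13 | exact absurd heq n13.symm
         | exact absurd heq n14 | exact absurd heq n14.symm
         | exact absurd heq n15 | exact absurd heq n15.symm
         | exact absurd heq n23 | exact absurd heq n23.symm
         | exact absurd heq n24 | exact absurd heq n24.symm
         | exact absurd heq n26 | exact absurd heq n26.symm
         | exact absurd heq n35 | exact absurd heq n35.symm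
         | exact absurd heq n36 | exact absurd heq n36.symm
         | exact absurd heq n45 | exact absurd heq n45.symm
         | exact absurd heq n46 | exact absurd heq n46.symm
         | exact absurd heq n56 | exact absurd heq n56.symm
         | exact absurd heq hA | exact absurd heq hA.symm
         | exact absurd heq hB | exact absurd heq hB.symm
         | exact absurd heq hC | exact absurd heq hC.symm)
end

section
variable (ψ : Sym2 V4 → ℕ)
local notation "l0" => (Sum.inl 0 : V4)
local notation "l1" => (Sum.inl 1 : V4)
local notation "r0" => (Sum.inr 0 : V4)

lemma lemAA (hproper : IsProperEdgeColouring GG ψ) {j j' : Fin 5}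
    (h : ψ (s(l0, l1)) = ψ (s(r0, Sum.inr j)))
    (h' : ψ (s(l0, l1)) = ψ (s(r0, Sum.inr j')))
    (hjj' : j ≠ j') (hj : j ≠ 0) (hj' : j' ≠ 0) : False :=
  hproper _ (GG.mem_edgeSet.mpr (adj6 j hj)) _ (GG.mem_edgeSet.mpr (adj6 j' hj'))
    (by simp [Sym2.eq_iff, hjj', hjj'.symm, hj, hj'.symm]) ⟨r0, by simp⟩
    (h.symm.trans h')

lemma lemBB (hproper : IsProperEdgeColouring GG ψ) {j j' : Fin 5}
    (h : ψ (s(l0, r0)) = ψ (s(l1, Sum.inr j)))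
    (h' : ψ (s(l0, r0)) = ψ (s(l1, Sum.inr j')))
    (hjj' : j ≠ j') : False :=
  hproper _ (GG.mem_edgeSet.mpr (adj5 j)) _ (GG.mem_edgeSet.mpr (adj5 j'))
    (by simp [Sym2.eq_iff, hjj']) ⟨l1, by simp⟩
    (h.symm.trans h')

lemma lemCC (hproper : IsProperEdgeColouring GG ψ) {j j' : Fin 5}
    (h : ψ (s(l0, Sum.inr j)) = ψ (s(l1, r0)))
    (h' : ψ (s(l0, Sum.inr j')) = ψ (s(l1, r0)))
    (hjj' : j ≠ j') : False :=
  hproper _ (GG.mem_edgeSet.mpr (adj3 j)) _ (GG.mem_edgeSet.mpr (adj3 j'))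
    (by simp [Sym2.eq_iff, hjj']) ⟨l0, by simp⟩
    (h.trans h'.symm)

end

/-- every proper edge-colouring of the join of `K_{1,3}` and `K_{1,4}`
contains a rainbow copy of `K₄`. -/
theorem join_star_star_rainbow_K4
    (ψ : Sym2 (Fin 4 ⊕ Fin 5) → ℕ)
    (hproper : IsProperEdgeColouring (graphJoin (_root_.starGraph 3) (_root_.starGraph 4)) ψ) :
    ∃ s : Finset (Fin 4 ⊕ Fin 5), s.card = 4 ∧
      IsRainbowClique (graphJoin (_root_.starGraph 3) (_root_.starGraph 4)) ψ s := by
  have key : ∀ j : Fin 5, j ≠ 0 →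
      (∃ s : Finset V4, s.card = 4 ∧ IsRainbowClique GG ψ s) ∨
      ψ (s(Sum.inl 0, Sum.inl 1)) = ψ (s(Sum.inr 0, Sum.inr j)) ∨
      ψ (s(Sum.inl 0, Sum.inr 0)) = ψ (s(Sum.inl 1, Sum.inr j)) ∨
      ψ (s(Sum.inl 0, Sum.inr j)) = ψ (s(Sum.inl 1, Sum.inr 0)) := by
    intro j hj
    by_cases hA : ψ (s(Sum.inl 0, Sum.inl 1)) = ψ (s(Sum.inr 0, Sum.inr j))
    · exact Or.inr (Or.inl hA)
    by_cases hB : ψ (s(Sum.inl 0, Sum.inr 0)) = ψ (s(Sum.inl 1, Sum.inr j))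
    · exact Or.inr (Or.inr (Or.inl hB))
    by_cases hC : ψ (s(Sum.inl 0, Sum.inr j)) = ψ (s(Sum.inl 1, Sum.inr 0))
    · exact Or.inr (Or.inr (Or.inr hC))
    exact Or.inl (keyLemma j ψ hproper hj hA hB hC)
  rcases key 1 (by decide) with hG | h1
  · exact hG
  rcases key 2 (by decide) with hG | h2
  · exact hG
  rcases key 3 (by decide) with hG | h3
  · exact hG
  rcases key 4 (by decide) with hG | h4
  · exact hG
  exfalso
  rcases h1 with h1 | h1 | h1 <;> rcases h2 with h2 | h2 | h2 <;>
    rcases h3 with h3 | h3 | h3 <;> rcases h4 with h4 | h4 | h4 <;>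
    first
    | exact lemAA ψ hproper h1 h2 (by decide) (by decide) (by decide)
    | exact lemAA ψ hproper h1 h3 (by decide) (by decide) (by decide)
    | exact lemAA ψ hproper h1 h4 (by decide) (by decide) (by decide)
    | exact lemAA ψ hproper h2 h3 (by decide) (by decide) (by decide)
    | exact lemAA ψ hproper h2 h4 (by decide) (by decide) (by decide)
    | exact lemAA ψ hproper h3 h4 (by decide) (by decide) (by decide)
    | exact lemBB ψ hproper h1 h2 (by decide)
    | exact lemBB ψ hproper h1 h3 (by decide)
    | exact lemBB ψ hproper h1 h4 (by decide)
    | exact lemBB ψ hproper h2 h3 (by decide)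
    | exact lemBB ψ hproper h2 h4 (by decide)
    | exact lemBB ψ hproper h3 h4 (by decide)
    | exact lemCC ψ hproper h1 h2 (by decide)
    | exact lemCC ψ hproper h1 h3 (by decide)
    | exact lemCC ψ hproper h1 h4 (by decide)
    | exact lemCC ψ hproper h2 h3 (by decide)
    | exact lemCC ψ hproper h2 h4 (by decide)
    | exact lemCC ψ hproper h3 h4 (by decide)
end

section
/- Let R_7 be the graph on vertices {u_1,u_2,u_3,w_1,w_2,w_3,w_4} with edges {u_1u_2, u_2u_3, u_1w_1, u_1w_2, u_2w_1, u_2w_2, u_2w_3, u_2w_4, u_3w_3, u_3w_4}, and let T_{10} be ten triangles glued at a single central vertex x (vertices x, v_1,...,v_20, edges xv_i for i ∈ [20] and v_{2i−1}v_{2i} for i ∈ [10]). For every proper edge-colouring ψ of the vertex-disjoint union of R_7 and T_{10}, there exist a triangle Q_1 ⊆ T_{10} and a triangle Q_2 ⊆ R_7 whose colour sets under ψ are disjoint. -/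
open SimpleGraph

/-- The graph `R₇` on vertices `u₁ u₂ u₃ w₁ w₂ w₃ w₄` (encoded as `0 1 2 3 4 5 6`),
obtained from a path `u₁u₂u₃` by attaching two triangles to each of its edges. -/
def R7 : SimpleGraph (Fin 7) :=
  SimpleGraph.fromRel (fun a b =>
    (a = 0 ∧ b = 1) ∨ (a = 1 ∧ b = 2) ∨ (a = 0 ∧ b = 3) ∨ (a = 0 ∧ b = 4) ∨
    (a = 1 ∧ b = 3) ∨ (a = 1 ∧ b = 4) ∨ (a = 1 ∧ b = 5) ∨ (a = 1 ∧ b = 6) ∨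
    (a = 2 ∧ b = 5) ∨ (a = 2 ∧ b = 6))

/-- The graph `T₁₀`: ten triangles glued along the central vertex `x = 0`;
the vertices `v₁, …, v₂₀` are `1, …, 20` and the triangles are `{0, 2i-1, 2i}`. -/
def T10 : SimpleGraph (Fin 21) :=
  SimpleGraph.fromRel (fun a b =>
    (a = 0 ∧ b ≠ 0) ∨ (a.val % 2 = 1 ∧ b.val = a.val + 1))

private lemma spokeKill (sx sy r p q a a' b b' c c' d d' : ℕ)
    (u1 : sx≠p∧sx≠q∧sx≠a∧sx≠a'∧sx≠b∧sx≠b'∧sx≠c∧sx≠c'∧sx≠d∧sx≠d')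
    (u2 : sy≠p∧sy≠q∧sy≠a∧sy≠a'∧sy≠b∧sy≠b'∧sy≠c∧sy≠c'∧sy≠d∧sy≠d')
    (h : sx = p ∨ sx = a ∨ sx = a' ∨ sy = p ∨ sy = a ∨ sy = a' ∨ r = p ∨ r = a ∨ r = a') :
    r = p ∨ r = a ∨ r = a' := by
  obtain ⟨x1,x2,x3,x4,x5,x6,x7,x8,x9,x10⟩ := u1
  obtain ⟨y1,y2,y3,y4,y5,y6,y7,y8,y9,y10⟩ := u2
  tauto

private lemma rimLemma (r p q a a' b b' c c' d d' : ℕ)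
    (h1 : p ≠ a) (h2 : p ≠ b) (h3 : a ≠ b) (h4 : p ≠ q) (h5 : p ≠ a') (h6 : p ≠ b') (h7 : p ≠ c) (h8 : p ≠ d) (h9 : q ≠ a') (h10 : q ≠ b') (h11 : q ≠ c) (h12 : q ≠ d) (h13 : a' ≠ b') (h14 : a' ≠ c) (h15 : a' ≠ d) (h16 : b' ≠ c) (h17 : b' ≠ d) (h18 : c ≠ d) (h19 : q ≠ c') (h20 : q ≠ d') (h21 : c' ≠ d')
    (rA : r = p ∨ r = a ∨ r = a') (rB : r = p ∨ r = b ∨ r = b')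
    (rC : r = q ∨ r = c ∨ r = c') (rD : r = q ∨ r = d ∨ r = d') :
    False := by
  rcases rA with e1|e1|e1
  ·
    rcases rB with e2|e2|e2
    ·
      rcases rC with e3|e3|e3
      · exact absurd (e1.symm.trans e3) h4
      · exact absurd (e1.symm.trans e3) h7
      ·
        rcases rD with e4|e4|e4
        · exact absurd (e1.symm.trans e4) h4
        · exact absurd (e1.symm.trans e4) h8
        · exact absurd (e3.symm.trans e4) h21
    · exact absurd (e1.symm.trans e2) h2
    · exact absurd (e1.symm.trans e2) h6
  ·
    rcases rB with e2|e2|e2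
    · exact absurd (e1.symm.trans e2) h1.symm
    · exact absurd (e1.symm.trans e2) h3
    ·
      rcases rC with e3|e3|e3
      · exact absurd (e2.symm.trans e3) h10.symm
      · exact absurd (e2.symm.trans e3) h16
      ·
        rcases rD with e4|e4|e4
        · exact absurd (e2.symm.trans e4) h10.symm
        · exact absurd (e2.symm.trans e4) h17
        · exact absurd (e3.symm.trans e4) h21
  ·
    rcases rB with e2|e2|e2
    · exact absurd (e1.symm.trans e2) h5.symm
    ·
      rcases rC with e3|e3|e3
      · exact absurd (e1.symm.trans e3) h9.symm
      · exact absurd (e1.symm.trans e3) h14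
      ·
        rcases rD with e4|e4|e4
        · exact absurd (e1.symm.trans e4) h9.symm
        · exact absurd (e1.symm.trans e4) h15
        · exact absurd (e3.symm.trans e4) h21
    · exact absurd (e1.symm.trans e2) h13

private lemma keyLemma_s6 (x r p q a a' b b' c c' d d' : ℕ)
    (g1 : p ≠ q) (g2 : p ≠ a) (g3 : p ≠ a') (g4 : p ≠ b) (g5 : p ≠ b') (g6 : p ≠ c) (g7 : p ≠ c') (g8 : p ≠ d) (g9 : p ≠ d') (g10 : q ≠ a) (g11 : q ≠ a') (g12 : q ≠ b) (g13 : q ≠ b') (g14 : q ≠ c) (g15 : q ≠ c') (g16 : q ≠ d) (g17 : q ≠ d') (g18 : a ≠ a') (g19 : a ≠ b) (g20 : a ≠ b') (g21 : a ≠ c) (g22 : a ≠ c') (g23 : a ≠ d) (g24 : a ≠ d') (g25 : a' ≠ b) (g26 : a' ≠ b') (g27 : a' ≠ c) (g28 : a' ≠ c') (g29 : a' ≠ d) (g30 : a' ≠ d') (g31 : b ≠ b') (g32 : b ≠ c) (g33 : b ≠ c') (g34 : b ≠ d) (g35 : b ≠ d') (g36 : b' ≠ c) (g37 : b' ≠ c')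 (g38 : b' ≠ d) (g39 : b' ≠ d') (g40 : c ≠ c') (g41 : c ≠ d) (g42 : c ≠ d') (g43 : c' ≠ d) (g44 : c' ≠ d') (g45 : d ≠ d')
    (hA : x = p ∨ x = a ∨ x = a' ∨ r = p ∨ r = a ∨ r = a')
    (hB : x = p ∨ x = b ∨ x = b' ∨ r = p ∨ r = b ∨ r = b')
    (hC : x = q ∨ x = c ∨ x = c' ∨ r = q ∨ r = c ∨ r = c')
    (hD : x = q ∨ x = d ∨ x = d' ∨ r = q ∨ r = d ∨ r = d') :
    x = p ∨ x = q := by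
  rcases hA with e1|e1|e1|e1|e1|e1
  ·
    rcases hB with e2|e2|e2|e2|e2|e2
    ·
      rcases hC with e3|e3|e3|e3|e3|e3
      · exact absurd (e1.symm.trans e3) g1
      · exact absurd (e1.symm.trans e3) g6
      · exact absurd (e1.symm.trans e3) g7
      ·
        rcases hD with e4|e4|e4|e4|e4|e4
        · exact absurd (e1.symm.trans e4) g1
        · exact absurd (e1.symm.trans e4) g8
        · exact absurd (e1.symm.trans e4) g9
        ·
          exact Or.inl e1
        · exact absurd (e3.symm.trans e4) g16
        · exact absurd (e3.symm.trans e4) g17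
      ·
        rcases hD with e4|e4|e4|e4|e4|e4
        · exact absurd (e1.symm.trans e4) g1
        · exact absurd (e1.symm.trans e4) g8
        · exact absurd (e1.symm.trans e4) g9
        · exact absurd (e3.symm.trans e4) g14.symm
        · exact absurd (e3.symm.trans e4) g41
        · exact absurd (e3.symm.trans e4) g42
      ·
        rcases hD with e4|e4|e4|e4|e4|e4
        · exact absurd (e1.symm.trans e4) g1
        · exact absurd (e1.symm.trans e4) g8
        · exact absurd (e1.symm.trans e4) g9
        · exact absurd (e3.symm.trans e4) g15.symm
        · exact absurd (e3.symm.trans e4) g43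
        · exact absurd (e3.symm.trans e4) g44
    · exact absurd (e1.symm.trans e2) g4
    · exact absurd (e1.symm.trans e2) g5
    ·
      rcases hC with e3|e3|e3|e3|e3|e3
      · exact absurd (e1.symm.trans e3) g1
      · exact absurd (e1.symm.trans e3) g6
      · exact absurd (e1.symm.trans e3) g7
      · exact absurd (e2.symm.trans e3) g1
      · exact absurd (e2.symm.trans e3) g6
      · exact absurd (e2.symm.trans e3) g7
    ·
      rcases hC with e3|e3|e3|e3|e3|e3
      · exact absurd (e1.symm.trans e3) g1
      · exact absurd (e1.symm.trans e3) g6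
      · exact absurd (e1.symm.trans e3) g7
      · exact absurd (e2.symm.trans e3) g12.symm
      · exact absurd (e2.symm.trans e3) g32
      · exact absurd (e2.symm.trans e3) g33
    ·
      rcases hC with e3|e3|e3|e3|e3|e3
      · exact absurd (e1.symm.trans e3) g1
      · exact absurd (e1.symm.trans e3) g6
      · exact absurd (e1.symm.trans e3) g7
      · exact absurd (e2.symm.trans e3) g13.symm
      · exact absurd (e2.symm.trans e3) g36
      · exact absurd (e2.symm.trans e3) g37
  ·
    rcases hB with e2|e2|e2|e2|e2|e2
    · exact absurd (e1.symm.trans e2) g2.symm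
    · exact absurd (e1.symm.trans e2) g19
    · exact absurd (e1.symm.trans e2) g20
    ·
      rcases hC with e3|e3|e3|e3|e3|e3
      · exact absurd (e1.symm.trans e3) g10.symm
      · exact absurd (e1.symm.trans e3) g21
      · exact absurd (e1.symm.trans e3) g22
      · exact absurd (e2.symm.trans e3) g1
      · exact absurd (e2.symm.trans e3) g6
      · exact absurd (e2.symm.trans e3) g7
    ·
      rcases hC with e3|e3|e3|e3|e3|e3
      · exact absurd (e1.symm.trans e3) g10.symm
      · exact absurd (e1.symm.trans e3) g21
      · exact absurd (e1.symm.trans e3) g22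
      · exact absurd (e2.symm.trans e3) g12.symm
      · exact absurd (e2.symm.trans e3) g32
      · exact absurd (e2.symm.trans e3) g33
    ·
      rcases hC with e3|e3|e3|e3|e3|e3
      · exact absurd (e1.symm.trans e3) g10.symm
      · exact absurd (e1.symm.trans e3) g21
      · exact absurd (e1.symm.trans e3) g22
      · exact absurd (e2.symm.trans e3) g13.symm
      · exact absurd (e2.symm.trans e3) g36
      · exact absurd (e2.symm.trans e3) g37
  ·
    rcases hB with e2|e2|e2|e2|e2|e2
    · exact absurd (e1.symm.trans e2) g3.symm
    · exact absurd (e1.symm.trans e2) g25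
    · exact absurd (e1.symm.trans e2) g26
    ·
      rcases hC with e3|e3|e3|e3|e3|e3
      · exact absurd (e1.symm.trans e3) g11.symm
      · exact absurd (e1.symm.trans e3) g27
      · exact absurd (e1.symm.trans e3) g28
      · exact absurd (e2.symm.trans e3) g1
      · exact absurd (e2.symm.trans e3) g6
      · exact absurd (e2.symm.trans e3) g7
    ·
      rcases hC with e3|e3|e3|e3|e3|e3
      · exact absurd (e1.symm.trans e3) g11.symm
      · exact absurd (e1.symm.trans e3) g27
      · exact absurd (e1.symm.trans e3) g28
      · exact absurd (e2.symm.trans e3) g12.symm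
      · exact absurd (e2.symm.trans e3) g32
      · exact absurd (e2.symm.trans e3) g33
    ·
      rcases hC with e3|e3|e3|e3|e3|e3
      · exact absurd (e1.symm.trans e3) g11.symm
      · exact absurd (e1.symm.trans e3) g27
      · exact absurd (e1.symm.trans e3) g28
      · exact absurd (e2.symm.trans e3) g13.symm
      · exact absurd (e2.symm.trans e3) g36
      · exact absurd (e2.symm.trans e3) g37
  ·
    rcases hB with e2|e2|e2|e2|e2|e2
    ·
      rcases hC with e3|e3|e3|e3|e3|e3
      · exact absurd (e2.symm.trans e3) g1
      · exact absurd (e2.symm.trans e3) g6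
      · exact absurd (e2.symm.trans e3) g7
      · exact absurd (e1.symm.trans e3) g1
      · exact absurd (e1.symm.trans e3) g6
      · exact absurd (e1.symm.trans e3) g7
    ·
      rcases hC with e3|e3|e3|e3|e3|e3
      · exact absurd (e2.symm.trans e3) g12.symm
      · exact absurd (e2.symm.trans e3) g32
      · exact absurd (e2.symm.trans e3) g33
      · exact absurd (e1.symm.trans e3) g1
      · exact absurd (e1.symm.trans e3) g6
      · exact absurd (e1.symm.trans e3) g7
    ·
      rcases hC with e3|e3|e3|e3|e3|e3
      · exact absurd (e2.symm.trans e3) g13.symm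
      · exact absurd (e2.symm.trans e3) g36
      · exact absurd (e2.symm.trans e3) g37
      · exact absurd (e1.symm.trans e3) g1
      · exact absurd (e1.symm.trans e3) g6
      · exact absurd (e1.symm.trans e3) g7
    ·
      rcases hC with e3|e3|e3|e3|e3|e3
      ·
        rcases hD with e4|e4|e4|e4|e4|e4
        ·
          exact Or.inr e3
        · exact absurd (e3.symm.trans e4) g16
        · exact absurd (e3.symm.trans e4) g17
        · exact absurd (e1.symm.trans e4) g1
        · exact absurd (e1.symm.trans e4) g8
        · exact absurd (e1.symm.trans e4) g9
      ·
        rcases hD with e4|e4|e4|e4|e4|e4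
        · exact absurd (e3.symm.trans e4) g14.symm
        · exact absurd (e3.symm.trans e4) g41
        · exact absurd (e3.symm.trans e4) g42
        · exact absurd (e1.symm.trans e4) g1
        · exact absurd (e1.symm.trans e4) g8
        · exact absurd (e1.symm.trans e4) g9
      ·
        rcases hD with e4|e4|e4|e4|e4|e4
        · exact absurd (e3.symm.trans e4) g15.symm
        · exact absurd (e3.symm.trans e4) g43
        · exact absurd (e3.symm.trans e4) g44
        · exact absurd (e1.symm.trans e4) g1
        · exact absurd (e1.symm.trans e4) g8
        · exact absurd (e1.symm.trans e4) g9
      · exact absurd (e1.symm.trans e3) g1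
      · exact absurd (e1.symm.trans e3) g6
      · exact absurd (e1.symm.trans e3) g7
    · exact absurd (e1.symm.trans e2) g4
    · exact absurd (e1.symm.trans e2) g5
  ·
    rcases hB with e2|e2|e2|e2|e2|e2
    ·
      rcases hC with e3|e3|e3|e3|e3|e3
      · exact absurd (e2.symm.trans e3) g1
      · exact absurd (e2.symm.trans e3) g6
      · exact absurd (e2.symm.trans e3) g7
      · exact absurd (e1.symm.trans e3) g10.symm
      · exact absurd (e1.symm.trans e3) g21
      · exact absurd (e1.symm.trans e3) g22
    ·
      rcases hC with e3|e3|e3|e3|e3|e3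
      · exact absurd (e2.symm.trans e3) g12.symm
      · exact absurd (e2.symm.trans e3) g32
      · exact absurd (e2.symm.trans e3) g33
      · exact absurd (e1.symm.trans e3) g10.symm
      · exact absurd (e1.symm.trans e3) g21
      · exact absurd (e1.symm.trans e3) g22
    ·
      rcases hC with e3|e3|e3|e3|e3|e3
      · exact absurd (e2.symm.trans e3) g13.symm
      · exact absurd (e2.symm.trans e3) g36
      · exact absurd (e2.symm.trans e3) g37
      · exact absurd (e1.symm.trans e3) g10.symm
      · exact absurd (e1.symm.trans e3) g21
      · exact absurd (e1.symm.trans e3) g22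
    · exact absurd (e1.symm.trans e2) g2.symm
    · exact absurd (e1.symm.trans e2) g19
    · exact absurd (e1.symm.trans e2) g20
  ·
    rcases hB with e2|e2|e2|e2|e2|e2
    ·
      rcases hC with e3|e3|e3|e3|e3|e3
      · exact absurd (e2.symm.trans e3) g1
      · exact absurd (e2.symm.trans e3) g6
      · exact absurd (e2.symm.trans e3) g7
      · exact absurd (e1.symm.trans e3) g11.symm
      · exact absurd (e1.symm.trans e3) g27
      · exact absurd (e1.symm.trans e3) g28
    ·
      rcases hC with e3|e3|e3|e3|e3|e3
      · exact absurd (e2.symm.trans e3) g12.symm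
      · exact absurd (e2.symm.trans e3) g32
      · exact absurd (e2.symm.trans e3) g33
      · exact absurd (e1.symm.trans e3) g11.symm
      · exact absurd (e1.symm.trans e3) g27
      · exact absurd (e1.symm.trans e3) g28
    ·
      rcases hC with e3|e3|e3|e3|e3|e3
      · exact absurd (e2.symm.trans e3) g13.symm
      · exact absurd (e2.symm.trans e3) g36
      · exact absurd (e2.symm.trans e3) g37
      · exact absurd (e1.symm.trans e3) g11.symm
      · exact absurd (e1.symm.trans e3) g27
      · exact absurd (e1.symm.trans e3) g28
    · exact absurd (e1.symm.trans e2) g3.symm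
    · exact absurd (e1.symm.trans e2) g25
    · exact absurd (e1.symm.trans e2) g26

private lemma kill3 (sx sy r α β γ : ℕ) (n1 : sx≠α) (n2 : sx≠β) (n3 : sx≠γ)
    (m1 : sy≠α) (m2 : sy≠β) (m3 : sy≠γ)
    (h : sx=α∨sx=β∨sx=γ∨sy=α∨sy=β∨sy=γ∨r=α∨r=β∨r=γ) : r=α∨r=β∨r=γ := by tauto

private lemma kill3x (x y r α β γ : ℕ) (m1 : y≠α) (m2 : y≠β) (m3 : y≠γ)
    (h : x=α∨x=β∨x=γ∨y=α∨y=β∨y=γ∨r=α∨r=β∨r=γ) : x=α∨x=β∨x=γ∨r=α∨r=β∨r=γ := by tauto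

private lemma kill3y (x y r α β γ : ℕ) (m1 : y≠α) (m2 : y≠β) (m3 : y≠γ)
    (h : y=α∨y=β∨y=γ∨x=α∨x=β∨x=γ∨r=α∨r=β∨r=γ) : x=α∨x=β∨x=γ∨r=α∨r=β∨r=γ := by tauto

private lemma pigeonLemma (x y z p q : ℕ) (k0 : x = p ∨ x = q) (k1 : y = p ∨ y = q)
    (k2 : z = p ∨ z = q) (d01 : x ≠ y) (d02 : x ≠ z) (d12 : y ≠ z) : False := by
  rcases k0 with h0|h0 <;> rcases k1 with h1|h1 <;> rcases k2 with h2|h2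
  · exact d01 (h0.trans h1.symm)
  · exact d01 (h0.trans h1.symm)
  · exact d02 (h0.trans h2.symm)
  · exact d12 (h1.trans h2.symm)
  · exact d12 (h1.trans h2.symm)
  · exact d02 (h0.trans h2.symm)
  · exact d01 (h0.trans h1.symm)
  · exact d01 (h0.trans h1.symm)

private lemma nodupOfCard (l : List ℕ) (h : l.toFinset.card = l.length) : l.Nodup := by
  rw [← List.dedup_eq_self]
  refine (l.dedup_sublist).eq_of_length ?_
  rw [← List.card_toFinset, h]

private lemma core (p q a a' b b' c c' d d' : ℕ) (s s' r : Fin 10 → ℕ)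
    (hss : ∀ i j : Fin 10, i ≠ j → s i ≠ s j)
    (hs's' : ∀ i j : Fin 10, i ≠ j → s' i ≠ s' j)
    (hss' : ∀ i j : Fin 10, s i ≠ s' j)
    (h1 : p ≠ a) (h2 : p ≠ b) (h3 : a ≠ b) (h4 : p ≠ q) (h5 : p ≠ a') (h6 : p ≠ b') (h7 : p ≠ c) (h8 : p ≠ d) (h9 : q ≠ a') (h10 : q ≠ b') (h11 : q ≠ c) (h12 : q ≠ d) (h13 : a' ≠ b') (h14 : a' ≠ c) (h15 : a' ≠ d) (h16 : b' ≠ c) (h17 : b' ≠ d) (h18 : c ≠ d) (h19 : q ≠ c') (h20 : q ≠ d') (h21 : c' ≠ d')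
    (hA : ∀ i, s i = p ∨ s i = a ∨ s i = a' ∨ s' i = p ∨ s' i = a ∨ s' i = a' ∨ r i = p ∨ r i = a ∨ r i = a')
    (hB : ∀ i, s i = p ∨ s i = b ∨ s i = b' ∨ s' i = p ∨ s' i = b ∨ s' i = b' ∨ r i = p ∨ r i = b ∨ r i = b')
    (hC : ∀ i, s i = q ∨ s i = c ∨ s i = c' ∨ s' i = q ∨ s' i = c ∨ s' i = c' ∨ r i = q ∨ r i = c ∨ r i = c')
    (hD : ∀ i, s i = q ∨ s i = d ∨ s i = d' ∨ s' i = q ∨ s' i = d ∨ s' i = d' ∨ r i = q ∨ r i = d ∨ r i = d') :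
    False := by
  classical
  have step1 : ∀ i, ∃ x, (x = s i ∨ x = s' i) ∧
      (x=p∨x=q∨x=a∨x=a'∨x=b∨x=b'∨x=c∨x=c'∨x=d∨x=d') := by
    intro i
    by_contra h
    push_neg at h
    have u1 := h (s i) (Or.inl rfl)
    have u2 := h (s' i) (Or.inr rfl)
    obtain ⟨x1,x2,x3,x4,x5,x6,x7,x8,x9,x10⟩ := u1
    obtain ⟨y1,y2,y3,y4,y5,y6,y7,y8,y9,y10⟩ := u2
    exact rimLemma (r i) p q a a' b b' c c' d d' h1 h2 h3 h4 h5 h6 h7 h8 h9 h10 h11 h12 h13 h14 h15 h16 h17 h18 h19 h20 h21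
      (kill3 _ _ _ _ _ _ x1 x3 x4 y1 y3 y4 (hA i)) (kill3 _ _ _ _ _ _ x1 x5 x6 y1 y5 y6 (hB i))
      (kill3 _ _ _ _ _ _ x2 x7 x8 y2 y7 y8 (hC i)) (kill3 _ _ _ _ _ _ x2 x9 x10 y2 y9 y10 (hD i))
  choose σ hσ1 hσ2 using step1
  obtain ⟨U, hUdef⟩ : ∃ U : Finset ℕ, U = ([p,q,a,a',b,b',c,c',d,d'] : List ℕ).toFinset := ⟨_, rfl⟩
  have memU : ∀ x, x ∈ U ↔ (x=p∨x=q∨x=a∨x=a'∨x=b∨x=b'∨x=c∨x=c'∨x=d∨x=d') := by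
    intro x; rw [hUdef, List.mem_toFinset]; simp
  have hσmem : ∀ i, σ i ∈ U := fun i => (memU _).mpr (hσ2 i)
  have hσne : ∀ i j : Fin 10, i ≠ j → σ i ≠ σ j := by
    intro i j hij
    rcases hσ1 i with hi | hi <;> rcases hσ1 j with hj | hj <;> rw [hi, hj]
    · exact hss i j hij
    · exact hss' i j
    · exact fun h => (hss' j i) h.symm
    · exact hs's' i j hij
  have hcard10 : U.card = 10 := by
    have hle : U.card ≤ 10 := by
      rw [hUdef]
      exact le_trans (List.toFinset_card_le _) (le_of_eq rfl)
    have hge : 10 ≤ U.card := by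
      have hmap : ∀ i ∈ (Finset.univ : Finset (Fin 10)), σ i ∈ U := fun i _ => hσmem i
      have hinj : Set.InjOn σ (Finset.univ : Finset (Fin 10)) := by
        intro i _ j _ h
        by_contra hne
        exact hσne i j hne h
      have := Finset.card_le_card_of_injOn σ hmap hinj
      simpa using this
    exact le_antisymm hle hge
  have hlen : ([p,q,a,a',b,b',c,c',d,d'] : List ℕ).length = 10 := rfl
  have hnd := nodupOfCard [p,q,a,a',b,b',c,c',d,d'] ((hUdef ▸ hcard10).trans hlen.symm)
  simp only [List.nodup_cons, List.mem_cons, List.not_mem_nil, List.mem_singleton,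
    List.nodup_nil, and_true, not_or, or_false] at hnd
  obtain ⟨⟨g1,g2,g3,g4,g5,g6,g7,g8,g9⟩,⟨g10,g11,g12,g13,g14,g15,g16,g17⟩,
    ⟨g18,g19,g20,g21,g22,g23,g24⟩,⟨g25,g26,g27,g28,g29,g30⟩,⟨g31,g32,g33,g34,g35⟩,
    ⟨g36,g37,g38,g39⟩,⟨g40,g41,g42⟩,⟨g43,g44⟩,⟨g45,-⟩⟩ := hnd
  have hBoth : ∀ i0 : Fin 10,
      ¬ ((s i0=p∨s i0=q∨s i0=a∨s i0=a'∨s i0=b∨s i0=b'∨s i0=c∨s i0=c'∨s i0=d∨s i0=d') ∧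
         (s' i0=p∨s' i0=q∨s' i0=a∨s' i0=a'∨s' i0=b∨s' i0=b'∨s' i0=c∨s' i0=c'∨s' i0=d∨s' i0=d')) := by
    rintro i0 ⟨hs0, hs0'⟩
    have hkey : ∀ j : Fin 10, s' i0 ≠ (if j = i0 then s i0 else σ j) := by
      intro j
      by_cases h : j = i0
      · rw [if_pos h]
        exact (hss' i0 i0).symm
      · rw [if_neg h]
        rcases hσ1 j with hj | hj <;> rw [hj]
        · exact (hss' j i0).symm
        · exact fun hc => hs's' i0 j (fun e => h e.symm) hc
    have hf : ∀ o ∈ (Finset.univ : Finset (Option (Fin 10))),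
        (Option.elim o (s' i0) (fun j => if j = i0 then s i0 else σ j)) ∈ U := by
      rintro (_ | j) _
      · exact (memU _).mpr hs0'
      · by_cases h : j = i0
        · simp only [Option.elim, h, if_pos]
          exact (memU _).mpr hs0
        · simp only [Option.elim, if_neg h]
          exact hσmem j
    have hinj : Set.InjOn (fun o : Option (Fin 10) =>
        Option.elim o (s' i0) (fun j => if j = i0 then s i0 else σ j))
        (Finset.univ : Finset (Option (Fin 10))) := by
      rintro (_ | j) _ (_ | k) _ h
      · rfl
      · exact absurd h (hkey k)
      · exact absurd h.symm (hkey j)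
      · simp only [Option.elim] at h
        congr 1
        by_cases hj : j = i0 <;> by_cases hk : k = i0
        · rw [hj, hk]
        · exfalso
          rw [if_pos hj, if_neg hk] at h
          rcases hσ1 k with e | e <;> rw [e] at h
          · exact hss i0 k (fun hc => hk hc.symm) h
          · exact hss' i0 k h
        · exfalso
          rw [if_neg hj, if_pos hk] at h
          rcases hσ1 j with e | e <;> rw [e] at h
          · exact hss j i0 hj h
          · exact hss' i0 j h.symm
        · rw [if_neg hj, if_neg hk] at h
          by_contra hne
          exact hσne j k (by simpa using hne) h
    have hcard := Finset.card_le_card_of_injOn _ hf hinj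
    simp only [Finset.card_univ, Fintype.card_option, Fintype.card_fin] at hcard
    rw [hcard10] at hcard
    exact absurd hcard (by decide)
  have key : ∀ i, σ i = p ∨ σ i = q := by
    intro i
    have hB' := hBoth i
    rcases hσ1 i with hi | hi
    · have hsU : (s i=p∨s i=q∨s i=a∨s i=a'∨s i=b∨s i=b'∨s i=c∨s i=c'∨s i=d∨s i=d') := by
        rw [← hi]; exact hσ2 i
      have h' : ¬ (s' i=p∨s' i=q∨s' i=a∨s' i=a'∨s' i=b∨s' i=b'∨s' i=c∨s' i=c'∨s' i=d∨s' i=d') :=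
        fun hc => hB' ⟨hsU, hc⟩
      push_neg at h'
      obtain ⟨y1,y2,y3,y4,y5,y6,y7,y8,y9,y10⟩ := h'
      rw [hi]
      exact keyLemma_s6 (s i) (r i) p q a a' b b' c c' d d' g1 g2 g3 g4 g5 g6 g7 g8 g9 g10 g11 g12 g13 g14 g15 g16 g17 g18 g19 g20 g21 g22 g23 g24 g25 g26 g27 g28 g29 g30 g31 g32 g33 g34 g35 g36 g37 g38 g39 g40 g41 g42 g43 g44 g45
        (kill3x _ _ _ _ _ _ y1 y3 y4 (hA i)) (kill3x _ _ _ _ _ _ y1 y5 y6 (hB i))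
        (kill3x _ _ _ _ _ _ y2 y7 y8 (hC i)) (kill3x _ _ _ _ _ _ y2 y9 y10 (hD i))
    · have hsU : (s' i=p∨s' i=q∨s' i=a∨s' i=a'∨s' i=b∨s' i=b'∨s' i=c∨s' i=c'∨s' i=d∨s' i=d') := by
        rw [← hi]; exact hσ2 i
      have h' : ¬ (s i=p∨s i=q∨s i=a∨s i=a'∨s i=b∨s i=b'∨s i=c∨s i=c'∨s i=d∨s i=d') :=
        fun hc => hB' ⟨hc, hsU⟩
      push_neg at h'
      obtain ⟨y1,y2,y3,y4,y5,y6,y7,y8,y9,y10⟩ := h'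
      rw [hi]
      exact keyLemma_s6 (s' i) (r i) p q a a' b b' c c' d d' g1 g2 g3 g4 g5 g6 g7 g8 g9 g10 g11 g12 g13 g14 g15 g16 g17 g18 g19 g20 g21 g22 g23 g24 g25 g26 g27 g28 g29 g30 g31 g32 g33 g34 g35 g36 g37 g38 g39 g40 g41 g42 g43 g44 g45
        (kill3y _ _ _ _ _ _ y1 y3 y4 (hA i)) (kill3y _ _ _ _ _ _ y1 y5 y6 (hB i))
        (kill3y _ _ _ _ _ _ y2 y7 y8 (hC i)) (kill3y _ _ _ _ _ _ y2 y9 y10 (hD i))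
  exact pigeonLemma (σ 0) (σ 1) (σ 2) p q (key 0) (key 1) (key 2)
    (hσne 0 1 (by decide)) (hσne 0 2 (by decide)) (hσne 1 2 (by decide))

section Aux

private def V1 (i : Fin 10) : Fin 21 := ⟨2*i.1+1, by omega⟩
private def V2 (i : Fin 10) : Fin 21 := ⟨2*i.1+2, by omega⟩

private instance : DecidableRel R7.Adj :=
  fun a b => decidable_of_iff _ (SimpleGraph.fromRel_adj _ a b).symm

private lemma inlAdj {x y : Fin 7} (h : R7.Adj x y) :
    (R7 ⊕g T10).Adj (Sum.inl x) (Sum.inl y) := by simpa using h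

private lemma inrAdj {x y : Fin 21} (h : T10.Adj x y) :
    (R7 ⊕g T10).Adj (Sum.inr x) (Sum.inr y) := by simpa using h

private lemma adj0 (x : Fin 21) (hx : x ≠ 0) : T10.Adj 0 x := by
  rw [T10, SimpleGraph.fromRel_adj]
  exact ⟨fun h => hx h.symm, Or.inl (Or.inl ⟨rfl, hx⟩)⟩

private lemma V1ne0 (i : Fin 10) : V1 i ≠ 0 := by
  intro h; have := congrArg Fin.val h; simp [V1] at this
private lemma V2ne0 (i : Fin 10) : V2 i ≠ 0 := by
  intro h; have := congrArg Fin.val h; simp [V2] at this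
private lemma V1neV2 (i j : Fin 10) : V1 i ≠ V2 j := by
  intro h; have := congrArg Fin.val h; simp [V1, V2] at this; omega
private lemma V1inj {i j : Fin 10} (h : i ≠ j) : V1 i ≠ V1 j := by
  intro hh; have h2 := congrArg Fin.val hh; simp [V1] at h2
  exact h (Fin.ext (by omega))
private lemma V2inj {i j : Fin 10} (h : i ≠ j) : V2 i ≠ V2 j := by
  intro hh; have h2 := congrArg Fin.val hh; simp [V2] at h2
  exact h (Fin.ext (by omega))

private lemma adjT1 (i : Fin 10) : T10.Adj 0 (V1 i) := adj0 _ (V1ne0 i)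
private lemma adjT3 (i : Fin 10) : T10.Adj 0 (V2 i) := adj0 _ (V2ne0 i)
private lemma adjT2 (i : Fin 10) : T10.Adj (V1 i) (V2 i) := by
  rw [T10, SimpleGraph.fromRel_adj]
  refine ⟨V1neV2 i i, Or.inl (Or.inr ⟨?_, ?_⟩)⟩ <;> simp [V1, V2] <;> omega

private lemma nine (n x y r α β γ : ℕ) (h1 : n = x ∨ n = r ∨ n = y)
    (h2 : n = α ∨ n = γ ∨ n = β) :
    x = α ∨ x = β ∨ x = γ ∨ y = α ∨ y = β ∨ y = γ ∨ r = α ∨ r = β ∨ r = γ := by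
  rcases h1 with h|h|h <;> rcases h2 with g|g|g <;> subst h <;> tauto

end Aux

/-- for every proper edge-colouring `ψ` of the vertex-disjoint union of
`R₇` and `T₁₀` there is a triangle `Q₁` of `T₁₀` and a triangle `Q₂` of `R₇` whose
colour sets under `ψ` are disjoint. -/
theorem disjointly_coloured_triangles
    (ψ : Sym2 (Fin 7 ⊕ Fin 21) → ℕ)
    (hproper : IsProperEdgeColouring (R7 ⊕g T10) ψ) :
    ∃ a b c : Fin 21, ∃ d e f : Fin 7,
      T10.Adj a b ∧ T10.Adj b c ∧ T10.Adj a c ∧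
      R7.Adj d e ∧ R7.Adj e f ∧ R7.Adj d f ∧
      Disjoint
        {n : ℕ | n = ψ (Sym2.mk (Sum.inr a) (Sum.inr b)) ∨
          n = ψ (Sym2.mk (Sum.inr b) (Sum.inr c)) ∨
          n = ψ (Sym2.mk (Sum.inr a) (Sum.inr c))}
        {n : ℕ | n = ψ (Sym2.mk (Sum.inl d) (Sum.inl e)) ∨
          n = ψ (Sym2.mk (Sum.inl e) (Sum.inl f)) ∨
          n = ψ (Sym2.mk (Sum.inl d) (Sum.inl f))} := by
  by_contra hcon
  push_neg at hcon
  have prop : ∀ (u v u' v' : Fin 7 ⊕ Fin 21), (R7 ⊕g T10).Adj u v → (R7 ⊕g T10).Adj u' v' →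
      s(u,v) ≠ s(u',v') → (∃ t, t ∈ s(u,v) ∧ t ∈ s(u',v')) →
      ψ (s(u,v)) ≠ ψ (s(u',v')) := by
    intro u v u' v' h h' hne hsh
    exact hproper _ (((R7 ⊕g T10).mem_edgeSet).mpr h) _ (((R7 ⊕g T10).mem_edgeSet).mpr h') hne hsh
  have hSp : ∀ x y : Fin 21, x ≠ 0 → y ≠ 0 → x ≠ y →
      ψ (s(Sum.inr 0, Sum.inr x)) ≠ ψ (s(Sum.inr 0, Sum.inr y)) := by
    intro x y hx hy hxy
    refine prop _ _ _ _ (inrAdj (adj0 x hx)) (inrAdj (adj0 y hy)) ?_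
      ⟨Sum.inr 0, Sym2.mem_mk_left _ _, Sym2.mem_mk_left _ _⟩
    intro hh
    rw [Sym2.eq_iff] at hh
    rcases hh with ⟨-,h'⟩|⟨-,h'⟩
    · exact hxy (Sum.inr.inj h')
    · exact hx (Sum.inr.inj h')
  have h1R : ψ (s((Sum.inl 0 : Fin 7 ⊕ Fin 21), Sum.inl 1)) ≠ ψ (s((Sum.inl 0 : Fin 7 ⊕ Fin 21), Sum.inl 3)) :=
    prop _ _ _ _ (inlAdj (by decide)) (inlAdj (by decide)) (by decide)
      ⟨Sum.inl 0, Sym2.mem_mk_left _ _, Sym2.mem_mk_left _ _⟩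
  have h2R : ψ (s((Sum.inl 0 : Fin 7 ⊕ Fin 21), Sum.inl 1)) ≠ ψ (s((Sum.inl 0 : Fin 7 ⊕ Fin 21), Sum.inl 4)) :=
    prop _ _ _ _ (inlAdj (by decide)) (inlAdj (by decide)) (by decide)
      ⟨Sum.inl 0, Sym2.mem_mk_left _ _, Sym2.mem_mk_left _ _⟩
  have h3R : ψ (s((Sum.inl 0 : Fin 7 ⊕ Fin 21), Sum.inl 3)) ≠ ψ (s((Sum.inl 0 : Fin 7 ⊕ Fin 21), Sum.inl 4)) :=
    prop _ _ _ _ (inlAdj (by decide)) (inlAdj (by decide)) (by decide)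
      ⟨Sum.inl 0, Sym2.mem_mk_left _ _, Sym2.mem_mk_left _ _⟩
  have h4R : ψ (s((Sum.inl 0 : Fin 7 ⊕ Fin 21), Sum.inl 1)) ≠ ψ (s((Sum.inl 1 : Fin 7 ⊕ Fin 21), Sum.inl 2)) :=
    prop _ _ _ _ (inlAdj (by decide)) (inlAdj (by decide)) (by decide)
      ⟨Sum.inl 1, Sym2.mem_mk_right _ _, Sym2.mem_mk_left _ _⟩
  have h5R : ψ (s((Sum.inl 0 : Fin 7 ⊕ Fin 21), Sum.inl 1)) ≠ ψ (s((Sum.inl 1 : Fin 7 ⊕ Fin 21), Sum.inl 3)) :=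
    prop _ _ _ _ (inlAdj (by decide)) (inlAdj (by decide)) (by decide)
      ⟨Sum.inl 1, Sym2.mem_mk_right _ _, Sym2.mem_mk_left _ _⟩
  have h6R : ψ (s((Sum.inl 0 : Fin 7 ⊕ Fin 21), Sum.inl 1)) ≠ ψ (s((Sum.inl 1 : Fin 7 ⊕ Fin 21), Sum.inl 4)) :=
    prop _ _ _ _ (inlAdj (by decide)) (inlAdj (by decide)) (by decide)
      ⟨Sum.inl 1, Sym2.mem_mk_right _ _, Sym2.mem_mk_left _ _⟩
  have h7R : ψ (s((Sum.inl 0 : Fin 7 ⊕ Fin 21), Sum.inl 1)) ≠ ψ (s((Sum.inl 1 : Fin 7 ⊕ Fin 21), Sum.inl 5)) :=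
    prop _ _ _ _ (inlAdj (by decide)) (inlAdj (by decide)) (by decide)
      ⟨Sum.inl 1, Sym2.mem_mk_right _ _, Sym2.mem_mk_left _ _⟩
  have h8R : ψ (s((Sum.inl 0 : Fin 7 ⊕ Fin 21), Sum.inl 1)) ≠ ψ (s((Sum.inl 1 : Fin 7 ⊕ Fin 21), Sum.inl 6)) :=
    prop _ _ _ _ (inlAdj (by decide)) (inlAdj (by decide)) (by decide)
      ⟨Sum.inl 1, Sym2.mem_mk_right _ _, Sym2.mem_mk_left _ _⟩
  have h9R : ψ (s((Sum.inl 1 : Fin 7 ⊕ Fin 21), Sum.inl 2)) ≠ ψ (s((Sum.inl 1 : Fin 7 ⊕ Fin 21), Sum.inl 3)) :=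
    prop _ _ _ _ (inlAdj (by decide)) (inlAdj (by decide)) (by decide)
      ⟨Sum.inl 1, Sym2.mem_mk_left _ _, Sym2.mem_mk_left _ _⟩
  have h10R : ψ (s((Sum.inl 1 : Fin 7 ⊕ Fin 21), Sum.inl 2)) ≠ ψ (s((Sum.inl 1 : Fin 7 ⊕ Fin 21), Sum.inl 4)) :=
    prop _ _ _ _ (inlAdj (by decide)) (inlAdj (by decide)) (by decide)
      ⟨Sum.inl 1, Sym2.mem_mk_left _ _, Sym2.mem_mk_left _ _⟩
  have h11R : ψ (s((Sum.inl 1 : Fin 7 ⊕ Fin 21), Sum.inl 2)) ≠ ψ (s((Sum.inl 1 : Fin 7 ⊕ Fin 21), Sum.inl 5)) :=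
    prop _ _ _ _ (inlAdj (by decide)) (inlAdj (by decide)) (by decide)
      ⟨Sum.inl 1, Sym2.mem_mk_left _ _, Sym2.mem_mk_left _ _⟩
  have h12R : ψ (s((Sum.inl 1 : Fin 7 ⊕ Fin 21), Sum.inl 2)) ≠ ψ (s((Sum.inl 1 : Fin 7 ⊕ Fin 21), Sum.inl 6)) :=
    prop _ _ _ _ (inlAdj (by decide)) (inlAdj (by decide)) (by decide)
      ⟨Sum.inl 1, Sym2.mem_mk_left _ _, Sym2.mem_mk_left _ _⟩
  have h13R : ψ (s((Sum.inl 1 : Fin 7 ⊕ Fin 21), Sum.inl 3)) ≠ ψ (s((Sum.inl 1 : Fin 7 ⊕ Fin 21), Sum.inl 4)) :=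
    prop _ _ _ _ (inlAdj (by decide)) (inlAdj (by decide)) (by decide)
      ⟨Sum.inl 1, Sym2.mem_mk_left _ _, Sym2.mem_mk_left _ _⟩
  have h14R : ψ (s((Sum.inl 1 : Fin 7 ⊕ Fin 21), Sum.inl 3)) ≠ ψ (s((Sum.inl 1 : Fin 7 ⊕ Fin 21), Sum.inl 5)) :=
    prop _ _ _ _ (inlAdj (by decide)) (inlAdj (by decide)) (by decide)
      ⟨Sum.inl 1, Sym2.mem_mk_left _ _, Sym2.mem_mk_left _ _⟩
  have h15R : ψ (s((Sum.inl 1 : Fin 7 ⊕ Fin 21), Sum.inl 3)) ≠ ψ (s((Sum.inl 1 : Fin 7 ⊕ Fin 21), Sum.inl 6)) :=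
    prop _ _ _ _ (inlAdj (by decide)) (inlAdj (by decide)) (by decide)
      ⟨Sum.inl 1, Sym2.mem_mk_left _ _, Sym2.mem_mk_left _ _⟩
  have h16R : ψ (s((Sum.inl 1 : Fin 7 ⊕ Fin 21), Sum.inl 4)) ≠ ψ (s((Sum.inl 1 : Fin 7 ⊕ Fin 21), Sum.inl 5)) :=
    prop _ _ _ _ (inlAdj (by decide)) (inlAdj (by decide)) (by decide)
      ⟨Sum.inl 1, Sym2.mem_mk_left _ _, Sym2.mem_mk_left _ _⟩
  have h17R : ψ (s((Sum.inl 1 : Fin 7 ⊕ Fin 21), Sum.inl 4)) ≠ ψ (s((Sum.inl 1 : Fin 7 ⊕ Fin 21), Sum.inl 6)) :=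
    prop _ _ _ _ (inlAdj (by decide)) (inlAdj (by decide)) (by decide)
      ⟨Sum.inl 1, Sym2.mem_mk_left _ _, Sym2.mem_mk_left _ _⟩
  have h18R : ψ (s((Sum.inl 1 : Fin 7 ⊕ Fin 21), Sum.inl 5)) ≠ ψ (s((Sum.inl 1 : Fin 7 ⊕ Fin 21), Sum.inl 6)) :=
    prop _ _ _ _ (inlAdj (by decide)) (inlAdj (by decide)) (by decide)
      ⟨Sum.inl 1, Sym2.mem_mk_left _ _, Sym2.mem_mk_left _ _⟩
  have h19R : ψ (s((Sum.inl 1 : Fin 7 ⊕ Fin 21), Sum.inl 2)) ≠ ψ (s((Sum.inl 2 : Fin 7 ⊕ Fin 21), Sum.inl 5)) :=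
    prop _ _ _ _ (inlAdj (by decide)) (inlAdj (by decide)) (by decide)
      ⟨Sum.inl 2, Sym2.mem_mk_right _ _, Sym2.mem_mk_left _ _⟩
  have h20R : ψ (s((Sum.inl 1 : Fin 7 ⊕ Fin 21), Sum.inl 2)) ≠ ψ (s((Sum.inl 2 : Fin 7 ⊕ Fin 21), Sum.inl 6)) :=
    prop _ _ _ _ (inlAdj (by decide)) (inlAdj (by decide)) (by decide)
      ⟨Sum.inl 2, Sym2.mem_mk_right _ _, Sym2.mem_mk_left _ _⟩
  have h21R : ψ (s((Sum.inl 2 : Fin 7 ⊕ Fin 21), Sum.inl 5)) ≠ ψ (s((Sum.inl 2 : Fin 7 ⊕ Fin 21), Sum.inl 6)) :=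
    prop _ _ _ _ (inlAdj (by decide)) (inlAdj (by decide)) (by decide)
      ⟨Sum.inl 2, Sym2.mem_mk_left _ _, Sym2.mem_mk_left _ _⟩
  have hA : ∀ i : Fin 10,
      ψ (s((Sum.inr 0 : Fin 7 ⊕ Fin 21), Sum.inr (V1 i))) = ψ (s((Sum.inl 0 : Fin 7 ⊕ Fin 21), Sum.inl 1)) ∨
      ψ (s((Sum.inr 0 : Fin 7 ⊕ Fin 21), Sum.inr (V1 i))) = ψ (s((Sum.inl 0 : Fin 7 ⊕ Fin 21), Sum.inl 3)) ∨
      ψ (s((Sum.inr 0 : Fin 7 ⊕ Fin 21), Sum.inr (V1 i))) = ψ (s((Sum.inl 1 : Fin 7 ⊕ Fin 21), Sum.inl 3)) ∨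
      ψ (s((Sum.inr 0 : Fin 7 ⊕ Fin 21), Sum.inr (V2 i))) = ψ (s((Sum.inl 0 : Fin 7 ⊕ Fin 21), Sum.inl 1)) ∨
      ψ (s((Sum.inr 0 : Fin 7 ⊕ Fin 21), Sum.inr (V2 i))) = ψ (s((Sum.inl 0 : Fin 7 ⊕ Fin 21), Sum.inl 3)) ∨
      ψ (s((Sum.inr 0 : Fin 7 ⊕ Fin 21), Sum.inr (V2 i))) = ψ (s((Sum.inl 1 : Fin 7 ⊕ Fin 21), Sum.inl 3)) ∨
      ψ (s((Sum.inr (V1 i) : Fin 7 ⊕ Fin 21), Sum.inr (V2 i))) = ψ (s((Sum.inl 0 : Fin 7 ⊕ Fin 21), Sum.inl 1)) ∨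
      ψ (s((Sum.inr (V1 i) : Fin 7 ⊕ Fin 21), Sum.inr (V2 i))) = ψ (s((Sum.inl 0 : Fin 7 ⊕ Fin 21), Sum.inl 3)) ∨
      ψ (s((Sum.inr (V1 i) : Fin 7 ⊕ Fin 21), Sum.inr (V2 i))) = ψ (s((Sum.inl 1 : Fin 7 ⊕ Fin 21), Sum.inl 3)) := by
    intro i
    have hd := hcon 0 (V1 i) (V2 i) 0 1 3 (adjT1 i) (adjT2 i) (adjT3 i)
      (by decide) (by decide) (by decide)
    rw [Set.not_disjoint_iff] at hd
    obtain ⟨n, hn1, hn2⟩ := hd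
    simp only [Set.mem_setOf_eq] at hn1 hn2
    exact nine n _ _ _ _ _ _ hn1 hn2
  have hB : ∀ i : Fin 10,
      ψ (s((Sum.inr 0 : Fin 7 ⊕ Fin 21), Sum.inr (V1 i))) = ψ (s((Sum.inl 0 : Fin 7 ⊕ Fin 21), Sum.inl 1)) ∨
      ψ (s((Sum.inr 0 : Fin 7 ⊕ Fin 21), Sum.inr (V1 i))) = ψ (s((Sum.inl 0 : Fin 7 ⊕ Fin 21), Sum.inl 4)) ∨
      ψ (s((Sum.inr 0 : Fin 7 ⊕ Fin 21), Sum.inr (V1 i))) = ψ (s((Sum.inl 1 : Fin 7 ⊕ Fin 21), Sum.inl 4)) ∨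
      ψ (s((Sum.inr 0 : Fin 7 ⊕ Fin 21), Sum.inr (V2 i))) = ψ (s((Sum.inl 0 : Fin 7 ⊕ Fin 21), Sum.inl 1)) ∨
      ψ (s((Sum.inr 0 : Fin 7 ⊕ Fin 21), Sum.inr (V2 i))) = ψ (s((Sum.inl 0 : Fin 7 ⊕ Fin 21), Sum.inl 4)) ∨
      ψ (s((Sum.inr 0 : Fin 7 ⊕ Fin 21), Sum.inr (V2 i))) = ψ (s((Sum.inl 1 : Fin 7 ⊕ Fin 21), Sum.inl 4)) ∨
      ψ (s((Sum.inr (V1 i) : Fin 7 ⊕ Fin 21), Sum.inr (V2 i))) = ψ (s((Sum.inl 0 : Fin 7 ⊕ Fin 21), Sum.inl 1)) ∨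
      ψ (s((Sum.inr (V1 i) : Fin 7 ⊕ Fin 21), Sum.inr (V2 i))) = ψ (s((Sum.inl 0 : Fin 7 ⊕ Fin 21), Sum.inl 4)) ∨
      ψ (s((Sum.inr (V1 i) : Fin 7 ⊕ Fin 21), Sum.inr (V2 i))) = ψ (s((Sum.inl 1 : Fin 7 ⊕ Fin 21), Sum.inl 4)) := by
    intro i
    have hd := hcon 0 (V1 i) (V2 i) 0 1 4 (adjT1 i) (adjT2 i) (adjT3 i)
      (by decide) (by decide) (by decide)
    rw [Set.not_disjoint_iff] at hd
    obtain ⟨n, hn1, hn2⟩ := hd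
    simp only [Set.mem_setOf_eq] at hn1 hn2
    exact nine n _ _ _ _ _ _ hn1 hn2
  have hC : ∀ i : Fin 10,
      ψ (s((Sum.inr 0 : Fin 7 ⊕ Fin 21), Sum.inr (V1 i))) = ψ (s((Sum.inl 1 : Fin 7 ⊕ Fin 21), Sum.inl 2)) ∨
      ψ (s((Sum.inr 0 : Fin 7 ⊕ Fin 21), Sum.inr (V1 i))) = ψ (s((Sum.inl 1 : Fin 7 ⊕ Fin 21), Sum.inl 5)) ∨
      ψ (s((Sum.inr 0 : Fin 7 ⊕ Fin 21), Sum.inr (V1 i))) = ψ (s((Sum.inl 2 : Fin 7 ⊕ Fin 21), Sum.inl 5)) ∨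
      ψ (s((Sum.inr 0 : Fin 7 ⊕ Fin 21), Sum.inr (V2 i))) = ψ (s((Sum.inl 1 : Fin 7 ⊕ Fin 21), Sum.inl 2)) ∨
      ψ (s((Sum.inr 0 : Fin 7 ⊕ Fin 21), Sum.inr (V2 i))) = ψ (s((Sum.inl 1 : Fin 7 ⊕ Fin 21), Sum.inl 5)) ∨
      ψ (s((Sum.inr 0 : Fin 7 ⊕ Fin 21), Sum.inr (V2 i))) = ψ (s((Sum.inl 2 : Fin 7 ⊕ Fin 21), Sum.inl 5)) ∨
      ψ (s((Sum.inr (V1 i) : Fin 7 ⊕ Fin 21), Sum.inr (V2 i))) = ψ (s((Sum.inl 1 : Fin 7 ⊕ Fin 21), Sum.inl 2)) ∨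
      ψ (s((Sum.inr (V1 i) : Fin 7 ⊕ Fin 21), Sum.inr (V2 i))) = ψ (s((Sum.inl 1 : Fin 7 ⊕ Fin 21), Sum.inl 5)) ∨
      ψ (s((Sum.inr (V1 i) : Fin 7 ⊕ Fin 21), Sum.inr (V2 i))) = ψ (s((Sum.inl 2 : Fin 7 ⊕ Fin 21), Sum.inl 5)) := by
    intro i
    have hd := hcon 0 (V1 i) (V2 i) 1 2 5 (adjT1 i) (adjT2 i) (adjT3 i)
      (by decide) (by decide) (by decide)
    rw [Set.not_disjoint_iff] at hd
    obtain ⟨n, hn1, hn2⟩ := hd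
    simp only [Set.mem_setOf_eq] at hn1 hn2
    exact nine n _ _ _ _ _ _ hn1 hn2
  have hD : ∀ i : Fin 10,
      ψ (s((Sum.inr 0 : Fin 7 ⊕ Fin 21), Sum.inr (V1 i))) = ψ (s((Sum.inl 1 : Fin 7 ⊕ Fin 21), Sum.inl 2)) ∨
      ψ (s((Sum.inr 0 : Fin 7 ⊕ Fin 21), Sum.inr (V1 i))) = ψ (s((Sum.inl 1 : Fin 7 ⊕ Fin 21), Sum.inl 6)) ∨
      ψ (s((Sum.inr 0 : Fin 7 ⊕ Fin 21), Sum.inr (V1 i))) = ψ (s((Sum.inl 2 : Fin 7 ⊕ Fin 21), Sum.inl 6)) ∨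
      ψ (s((Sum.inr 0 : Fin 7 ⊕ Fin 21), Sum.inr (V2 i))) = ψ (s((Sum.inl 1 : Fin 7 ⊕ Fin 21), Sum.inl 2)) ∨
      ψ (s((Sum.inr 0 : Fin 7 ⊕ Fin 21), Sum.inr (V2 i))) = ψ (s((Sum.inl 1 : Fin 7 ⊕ Fin 21), Sum.inl 6)) ∨
      ψ (s((Sum.inr 0 : Fin 7 ⊕ Fin 21), Sum.inr (V2 i))) = ψ (s((Sum.inl 2 : Fin 7 ⊕ Fin 21), Sum.inl 6)) ∨
      ψ (s((Sum.inr (V1 i) : Fin 7 ⊕ Fin 21), Sum.inr (V2 i))) = ψ (s((Sum.inl 1 : Fin 7 ⊕ Fin 21), Sum.inl 2)) ∨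
      ψ (s((Sum.inr (V1 i) : Fin 7 ⊕ Fin 21), Sum.inr (V2 i))) = ψ (s((Sum.inl 1 : Fin 7 ⊕ Fin 21), Sum.inl 6)) ∨
      ψ (s((Sum.inr (V1 i) : Fin 7 ⊕ Fin 21), Sum.inr (V2 i))) = ψ (s((Sum.inl 2 : Fin 7 ⊕ Fin 21), Sum.inl 6)) := by
    intro i
    have hd := hcon 0 (V1 i) (V2 i) 1 2 6 (adjT1 i) (adjT2 i) (adjT3 i)
      (by decide) (by decide) (by decide)
    rw [Set.not_disjoint_iff] at hd
    obtain ⟨n, hn1, hn2⟩ := hd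
    simp only [Set.mem_setOf_eq] at hn1 hn2
    exact nine n _ _ _ _ _ _ hn1 hn2
  exact core (ψ (s((Sum.inl 0 : Fin 7 ⊕ Fin 21), Sum.inl 1))) (ψ (s((Sum.inl 1 : Fin 7 ⊕ Fin 21), Sum.inl 2))) (ψ (s((Sum.inl 0 : Fin 7 ⊕ Fin 21), Sum.inl 3))) (ψ (s((Sum.inl 1 : Fin 7 ⊕ Fin 21), Sum.inl 3))) (ψ (s((Sum.inl 0 : Fin 7 ⊕ Fin 21), Sum.inl 4))) (ψ (s((Sum.inl 1 : Fin 7 ⊕ Fin 21), Sum.inl 4))) (ψ (s((Sum.inl 1 : Fin 7 ⊕ Fin 21), Sum.inl 5))) (ψ (s((Sum.inl 2 : Fin 7 ⊕ Fin 21), Sum.inl 5))) (ψ (s((Sum.inl 1 : Fin 7 ⊕ Fin 21), Sum.inl 6))) (ψ (s((Sum.inl 2 : Fin 7 ⊕ Fin 21), Sum.inl 6)))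
    (fun i => ψ (s((Sum.inr 0 : Fin 7 ⊕ Fin 21), Sum.inr (V1 i))))
    (fun i => ψ (s((Sum.inr 0 : Fin 7 ⊕ Fin 21), Sum.inr (V2 i))))
    (fun i => ψ (s((Sum.inr (V1 i) : Fin 7 ⊕ Fin 21), Sum.inr (V2 i))))
    (fun i j hij => hSp _ _ (V1ne0 i) (V1ne0 j) (V1inj hij))
    (fun i j hij => hSp _ _ (V2ne0 i) (V2ne0 j) (V2inj hij))
    (fun i j => hSp _ _ (V1ne0 i) (V2ne0 j) (V1neV2 i j))
    h1R h2R h3R h4R h5R h6R h7R h8R h9R h10R h11R h12R h13R h14R h15R h16R h17R h18R h19R h20R h21R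
    hA hB hC hD
end

section
/- Let F be the graph obtained from the star K_{1,25} by attaching 49 triangles to each of its 25 edges, where the third vertex of each triangle is new and unique to that triangle. Then the removal of any 24 matchings from F yields a graph that still contains a triangle. -/
open SimpleGraph

/-- Vertices of `F`: the centre, the 25 leaves, and a vertex `t_{i,j}` for each
leaf `i` and each `j ∈ [49]`. -/
abbrev FVert := Unit ⊕ (Fin 25 ⊕ Fin 25 × Fin 49)

/-- The graph `F` obtained from `K_{1,25}` by attaching `49` triangles to each of its
`25` edges, the third vertex of each triangle being new and unique to it: the centre
is adjacent to every leaf `lᵢ` and every `t_{i,j}`, and `t_{i,j}` is adjacent to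
`lᵢ`. -/
def Fgraph : SimpleGraph FVert :=
  SimpleGraph.fromRel (fun a b =>
    match a, b with
    | Sum.inl _, Sum.inr _ => True
    | Sum.inr (Sum.inl i), Sum.inr (Sum.inr p) => p.1 = i
    | _, _ => False)

/-- A set of edges of `G` is a matching if its members are pairwise disjoint edges. -/
def IsMatchingEdgeSet {V : Type*} (G : SimpleGraph V) (M : Set (Sym2 V)) : Prop :=
  M ⊆ G.edgeSet ∧ ∀ e₁ ∈ M, ∀ e₂ ∈ M, e₁ ≠ e₂ → ∀ v, ¬(v ∈ e₁ ∧ v ∈ e₂)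

private abbrev Fc : FVert := Sum.inl ()
private abbrev Fl (i : Fin 25) : FVert := Sum.inr (Sum.inl i)
private abbrev Ft (i : Fin 25) (j : Fin 49) : FVert := Sum.inr (Sum.inr (i, j))

lemma matching_unique {M : Set (Sym2 FVert)} (h : IsMatchingEdgeSet Fgraph M)
    {e₁ e₂ : Sym2 FVert} (h1 : e₁ ∈ M) (h2 : e₂ ∈ M) {v : FVert}
    (hv1 : v ∈ e₁) (hv2 : v ∈ e₂) : e₁ = e₂ := by
  by_contra hne
  exact h.2 e₁ h1 e₂ h2 hne v ⟨hv1, hv2⟩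

/-- removing any `24` matchings from `F` leaves a graph which still
contains a triangle. -/
theorem triangle_survives_removal_of_24_matchings
    (M : Fin 24 → Set (Sym2 FVert))
    (hM : ∀ k, IsMatchingEdgeSet Fgraph (M k)) :
    ∃ a b c : FVert,
      Fgraph.Adj a b ∧ Fgraph.Adj b c ∧ Fgraph.Adj a c ∧
      Sym2.mk a b ∉ ⋃ k, M k ∧
      Sym2.mk b c ∉ ⋃ k, M k ∧
      Sym2.mk a c ∉ ⋃ k, M k := by
  classical
  -- Step 1: find a leaf `i` such that no edge at the centre towards group `i` is removed.
  have hleaf : ∃ i : Fin 25, (∀ k, Sym2.mk Fc (Fl i) ∉ M k) ∧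
      (∀ j k, Sym2.mk Fc (Ft i j) ∉ M k) := by
    by_contra hcon
    push_neg at hcon
    -- for each i, there is an edge at the centre towards group i in some matching
    have hpick : ∀ i : Fin 25, ∃ k : Fin 24, ∃ e ∈ M k, Fc ∈ e ∧
        (e = Sym2.mk Fc (Fl i) ∨ ∃ j, e = Sym2.mk Fc (Ft i j)) := by
      intro i
      by_cases hL : ∃ k, Sym2.mk Fc (Fl i) ∈ M k
      · obtain ⟨k, hk⟩ := hL
        exact ⟨k, _, hk, by simp, Or.inl rfl⟩
      · push_neg at hL
        obtain ⟨j, k, hk⟩ := hcon i hL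
        exact ⟨k, _, hk, by simp, Or.inr ⟨j, rfl⟩⟩
    choose K E hE hcE hform using hpick
    have hinj : Function.Injective K := by
      intro i i' hkk
      by_contra hii
      have heq : E i = E i' := by
        have := hE i'
        rw [← hkk] at this
        exact matching_unique (hM (K i)) (hE i) this (hcE i) (hcE i')
      rcases hform i with h1 | ⟨j, h1⟩ <;> rcases hform i' with h2 | ⟨j', h2⟩ <;>
        rw [h1, h2] at heq <;> simp [Sym2.eq_iff, Prod.ext_iff] at heq <;> exact hii (by simp_all)
    have := Fintype.card_le_of_injective K hinj
    simp at this
  obtain ⟨i, hiL, hiT⟩ := hleaf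
  -- Step 2: find j such that the edge l_i t_{i,j} is in no matching.
  have htri : ∃ j : Fin 49, ∀ k, Sym2.mk (Fl i) (Ft i j) ∉ M k := by
    by_contra hcon
    push_neg at hcon
    choose K hK using hcon
    have hinj : Function.Injective K := by
      intro j j' hkk
      by_contra hjj
      have heq : Sym2.mk (Fl i) (Ft i j) = Sym2.mk (Fl i) (Ft i j') := by
        have := hK j'
        rw [← hkk] at this
        exact matching_unique (hM (K j)) (hK j) this (v := Fl i) (by simp) (by simp)
      simp [Sym2.eq_iff, Prod.ext_iff] at heq
      exact hjj heq
    have := Fintype.card_le_of_injective K hinj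
    simp at this
  obtain ⟨j, hj⟩ := htri
  refine ⟨Fc, Fl i, Ft i j, ?_, ?_, ?_, ?_, ?_, ?_⟩
  · simp [Fgraph, SimpleGraph.fromRel_adj]
  · simp [Fgraph, SimpleGraph.fromRel_adj]
  · simp [Fgraph, SimpleGraph.fromRel_adj]
  · simpa [Set.mem_iUnion] using fun k => hiL k
  · simpa [Set.mem_iUnion] using fun k => hj k
  · simpa [Set.mem_iUnion] using fun k => hiT j k
end
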